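/- arXiv:2111.04059 — 2 statements merged into one kernel-verified Lean document; each statement's English description precedes it below -/
import Mathlib

section
/- Let u(t) = Σ_{i=0}^{k-1} u_i δ^{(i)} be an admissible impulsive input (so that the output y from x(0)=0 is regular). Then the coefficient vector col(u_0, u_1, ..., u_{k-1}) lies in the kernel of the Markov parameter matrix M_k, i.e., D u_{k-1} = 0 and D u_{k-ℓ} + CB u_{k-ℓ+1} + CAB u_{k-ℓ+2} + ... + CA^{ℓ-2}B u_{k-1} = 0 for ℓ ∈ {2,...,k}. -/
open Matrix Polynomial

noncomputable def Markov {n m p : ℕ} (A : Matrix (Fin n) (Fin n) ℝ) (B : Matrix (Fin n) (Fin m) ℝ)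
    (C : Matrix (Fin p) (Fin n) ℝ) (D : Matrix (Fin p) (Fin m) ℝ) (k : ℕ) :
    Matrix (Fin k × Fin p) (Fin k × Fin m) ℝ :=
  fun ir jc =>
    if (ir.1 : ℕ) + (jc.1 : ℕ) + 1 < k then 0
    else if (ir.1 : ℕ) + (jc.1 : ℕ) + 1 = k then D ir.2 jc.2
    else (C * A ^ ((ir.1 : ℕ) + (jc.1 : ℕ) - k) * B) ir.2 jc.2

/-- A rational function is strictly proper if its numerator degree is
strictly less than its denominator degree. -/
def StrictlyProper (r : RatFunc ℝ) : Prop := r.num.degree < r.denom.degree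

/-- The transfer matrix `G(s) = C (sI - A)⁻¹ B + D` of the system `Σ`. -/
noncomputable def transferMatrix {n m p : ℕ} (A : Matrix (Fin n) (Fin n) ℝ)
    (B : Matrix (Fin n) (Fin m) ℝ) (C : Matrix (Fin p) (Fin n) ℝ)
    (D : Matrix (Fin p) (Fin m) ℝ) : Matrix (Fin p) (Fin m) (RatFunc ℝ) :=
  C.map (algebraMap ℝ (RatFunc ℝ)) *
      (Matrix.scalar (Fin n) (RatFunc.X : RatFunc ℝ) - A.map (algebraMap ℝ (RatFunc ℝ)))⁻¹ *
      B.map (algebraMap ℝ (RatFunc ℝ)) +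
    D.map (algebraMap ℝ (RatFunc ℝ))

def SP (r : RatFunc ℝ) : Prop := r.num.degree < r.denom.degree

lemma SP_iff (x : RatFunc ℝ) : SP x ↔ x = 0 ∨ x.intDegree < 0 := by
  by_cases hx : x = 0
  · subst hx
    simp [SP, RatFunc.num_zero, RatFunc.denom_zero]
  · have hn : x.num ≠ 0 := RatFunc.num_ne_zero hx
    have hd : x.denom ≠ 0 := x.denom_ne_zero
    rw [SP, Polynomial.degree_eq_natDegree hn, Polynomial.degree_eq_natDegree hd]
    rw [RatFunc.intDegree, sub_neg]
    simp [hx, Nat.cast_lt]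

lemma SP_zero : SP 0 := by rw [SP_iff]; left; rfl

lemma SP_of_neg (x : RatFunc ℝ) (h : x.intDegree < 0) : SP x := (SP_iff x).mpr (Or.inr h)

lemma SP_add {x y : RatFunc ℝ} (hx : SP x) (hy : SP y) : SP (x + y) := by
  rw [SP_iff] at *
  rcases hx with rfl | hx
  · simpa using hy
  rcases hy with rfl | hy
  · simpa using Or.inr hx
  by_cases hxy : x + y = 0
  · exact Or.inl hxy
  right
  have hy0 : y ≠ 0 := by rintro rfl; simp at hy  -- intDegree 0 = 0 not < 0
  calc (x+y).intDegree ≤ max x.intDegree y.intDegree := RatFunc.intDegree_add_le hy0 hxy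
    _ < 0 := max_lt hx hy

lemma SP_neg {x : RatFunc ℝ} (hx : SP x) : SP (-x) := by
  rw [SP_iff] at *
  rcases hx with rfl | hx
  · simp
  · right; rwa [RatFunc.intDegree_neg]

lemma SP_sum {α : Type*} (s : Finset α) (f : α → RatFunc ℝ) (h : ∀ a ∈ s, SP (f a)) :
    SP (∑ a ∈ s, f a) := by
  classical
  induction s using Finset.induction_on with
  | empty => simpa using SP_zero
  | insert _ _ hnot ih =>
    rw [Finset.sum_insert hnot]
    exact SP_add (h _ (Finset.mem_insert_self _ _)) (ih fun a ha => h _ (Finset.mem_insert_of_mem ha))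

lemma SP_poly_eq_zero {q : Polynomial ℝ} (h : SP (algebraMap (Polynomial ℝ) (RatFunc ℝ) q)) :
    q = 0 := by
  rw [SP, RatFunc.num_algebraMap, RatFunc.denom_algebraMap, Polynomial.degree_one] at h
  by_contra hq
  exact absurd h (not_lt.mpr (Polynomial.zero_le_degree_iff.mpr hq))

lemma intDeg_inv (x : RatFunc ℝ) : x⁻¹.intDegree = -x.intDegree := by
  by_cases hx : x = 0
  · simp [hx, RatFunc.intDegree_zero]
  · have h := RatFunc.intDegree_mul hx (inv_ne_zero hx)
    rw [mul_inv_cancel₀ hx, RatFunc.intDegree_one] at h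
    omega

lemma intDeg_const (r : ℝ) : (algebraMap ℝ (RatFunc ℝ) r).intDegree = 0 := by
  rw [RatFunc.algebraMap_eq_C]; exact RatFunc.intDegree_C r

lemma intDeg_X_pow (c : ℕ) : ((RatFunc.X : RatFunc ℝ) ^ c).intDegree = c := by
  have : ((RatFunc.X : RatFunc ℝ) ^ c) = algebraMap (Polynomial ℝ) (RatFunc ℝ) (Polynomial.X ^ c) := by
    rw [map_pow, RatFunc.algebraMap_X]
  rw [this, RatFunc.intDegree_polynomial, Polynomial.natDegree_X_pow]

lemma intDeg_Xinv_pow (c : ℕ) : ((RatFunc.X⁻¹ : RatFunc ℝ) ^ c).intDegree = -c := by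
  rw [inv_pow, intDeg_inv, intDeg_X_pow]

set_option synthInstance.maxHeartbeats 400000
set_option maxHeartbeats 1000000
section MatrixPart
variable {n : ℕ} (A : Matrix (Fin n) (Fin n) ℝ)

noncomputable def Smat : Matrix (Fin n) (Fin n) (RatFunc ℝ) :=
  Matrix.scalar (Fin n) (RatFunc.X : RatFunc ℝ) - A.map (algebraMap ℝ (RatFunc ℝ))

lemma Smat_eq : Smat A = (charmatrix A).map (algebraMap (Polynomial ℝ) (RatFunc ℝ)) := by
  unfold Smat charmatrix
  ext i j
  by_cases h : i = j <;>
    simp [h, Matrix.scalar, Matrix.diagonal, Matrix.sub_apply, RatFunc.algebraMap_X,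
      RatFunc.algebraMap_C, RatFunc.algebraMap_eq_C]

lemma Smat_det_isUnit : IsUnit (Smat A).det := by
  rw [Smat_eq, ← RingHom.mapMatrix_apply, ← RingHom.map_det]
  rw [isUnit_iff_ne_zero]
  simp only [ne_eq, map_eq_zero_iff _ (RatFunc.algebraMap_injective ℝ)]
  exact (Matrix.charpoly_monic A).ne_zero

lemma scalar_mul_eq_smul (x : RatFunc ℝ) (M : Matrix (Fin n) (Fin n) (RatFunc ℝ)) :
    Matrix.scalar (Fin n) x * M = x • M := by
  ext i j
  simp [Matrix.scalar, Matrix.diagonal_mul]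

lemma mul_scalar_eq_smul {n : ℕ} (x : RatFunc ℝ) (M : Matrix (Fin n) (Fin n) (RatFunc ℝ)) :
    M * Matrix.scalar (Fin n) x = x • M := by
  ext i j
  simp [Matrix.scalar, Matrix.mul_diagonal, mul_comm]

lemma Smat_inv_expand (K : ℕ) :
    (Smat A)⁻¹ = (∑ j ∈ Finset.range K,
        ((RatFunc.X⁻¹ : RatFunc ℝ) ^ (j+1)) • (A.map (algebraMap ℝ (RatFunc ℝ))) ^ j) +
      ((RatFunc.X⁻¹ : RatFunc ℝ) ^ K) • ((A.map (algebraMap ℝ (RatFunc ℝ))) ^ K * (Smat A)⁻¹) := by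
  set A' := A.map (algebraMap ℝ (RatFunc ℝ)) with hA'
  apply Matrix.inv_eq_right_inv
  rw [Matrix.mul_add, Finset.mul_sum]
  have hs : ∀ j : ℕ, Smat A * (((RatFunc.X⁻¹ : RatFunc ℝ) ^ (j+1)) • A' ^ j)
      = ((RatFunc.X⁻¹ : RatFunc ℝ) ^ j) • A' ^ j - ((RatFunc.X⁻¹ : RatFunc ℝ) ^ (j+1)) • A' ^ (j+1) := by
    intro j
    rw [Matrix.mul_smul, Smat, Matrix.sub_mul, scalar_mul_eq_smul, smul_sub, smul_smul,
      pow_succ, mul_assoc, inv_mul_cancel₀ RatFunc.X_ne_zero, mul_one]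
    rw [← hA', ← pow_succ']
  have htel : ∑ j ∈ Finset.range K, (Smat A * (((RatFunc.X⁻¹ : RatFunc ℝ) ^ (j+1)) • A' ^ j))
      = 1 - ((RatFunc.X⁻¹ : RatFunc ℝ) ^ K) • A' ^ K := by
    rw [Finset.sum_congr rfl fun j _ => hs j, Finset.sum_range_sub']
    simp
  rw [htel]
  have hcomm : Smat A * (A' ^ K * (Smat A)⁻¹) = A' ^ K := by
    have h1 : Smat A * A' ^ K = A' ^ K * Smat A := by
      rw [Smat, ← hA', Matrix.sub_mul, Matrix.mul_sub, scalar_mul_eq_smul, mul_scalar_eq_smul]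
      congr 1
      exact ((Commute.refl A').pow_right K).eq
    rw [← Matrix.mul_assoc, h1, Matrix.mul_assoc, Matrix.mul_nonsing_inv _ (Smat_det_isUnit A),
      Matrix.mul_one]
  rw [Matrix.mul_smul, hcomm]
  abel
end MatrixPart


section Main
set_option synthInstance.maxHeartbeats 400000
set_option maxHeartbeats 1000000

variable {n m p k : ℕ} (A : Matrix (Fin n) (Fin n) ℝ) (B : Matrix (Fin n) (Fin m) ℝ)
    (C : Matrix (Fin p) (Fin n) ℝ) (D : Matrix (Fin p) (Fin m) ℝ) (u : Fin k → Fin m → ℝ)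

noncomputable def Uvec : Fin m → RatFunc ℝ := fun j =>
  algebraMap (Polynomial ℝ) (RatFunc ℝ) (∑ l : Fin k, Polynomial.C (u l j) * Polynomial.X ^ (l : ℕ))

-- step 2 lemma : mulVec of mapped matrix
lemma mulVec_map_eq (M : Matrix (Fin p) (Fin m) ℝ) (i : Fin p) :
    ((M.map (algebraMap ℝ (RatFunc ℝ))).mulVec (Uvec u)) i
      = algebraMap (Polynomial ℝ) (RatFunc ℝ)
          (∑ l : Fin k, Polynomial.C ((M.mulVec (u l)) i) * Polynomial.X ^ (l : ℕ)) := by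
  simp only [Matrix.mulVec, dotProduct, Uvec, Matrix.map_apply, map_sum,
    Finset.mul_sum, Polynomial.C_mul, Finset.sum_mul]
  rw [Finset.sum_comm]
  refine Finset.sum_congr rfl fun l _ => Finset.sum_congr rfl fun j' _ => ?_
  rw [_root_.map_mul, _root_.map_mul, _root_.map_mul, map_pow, RatFunc.algebraMap_X,
    RatFunc.algebraMap_C, RatFunc.algebraMap_C, RatFunc.algebraMap_eq_C]
  ring

end Main

section Main2
set_option synthInstance.maxHeartbeats 400000
set_option maxHeartbeats 1000000

variable {n m p k : ℕ} (A : Matrix (Fin n) (Fin n) ℝ) (B : Matrix (Fin n) (Fin m) ℝ)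
    (C : Matrix (Fin p) (Fin n) ℝ) (D : Matrix (Fin p) (Fin m) ℝ) (u : Fin k → Fin m → ℝ)

noncomputable def aCoef (j : ℕ) (l : Fin k) (i : Fin p) : ℝ := ((C * A ^ j * B).mulVec (u l)) i

noncomputable def Ppoly (K : ℕ) (i : Fin p) : Polynomial ℝ :=
  (∑ l : Fin k, Polynomial.C ((D.mulVec (u l)) i) * Polynomial.X ^ (l : ℕ)) +
  ∑ j ∈ Finset.range K, ∑ l : Fin k,
    if j + 1 ≤ (l : ℕ) then Polynomial.C (aCoef A B C u j l i) * Polynomial.X ^ ((l : ℕ) - (j+1))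
    else 0

noncomputable def Trem (K : ℕ) : Matrix (Fin p) (Fin m) (RatFunc ℝ) :=
  C.map (algebraMap ℝ (RatFunc ℝ)) *
    ((A.map (algebraMap ℝ (RatFunc ℝ))) ^ K * (Smat A)⁻¹) * B.map (algebraMap ℝ (RatFunc ℝ))

noncomputable def Erem (K : ℕ) (i : Fin p) : RatFunc ℝ :=
  (RatFunc.X⁻¹ : RatFunc ℝ) ^ K * (((Trem A B C K).mulVec (Uvec u)) i) +
  ∑ j ∈ Finset.range K, ∑ l : Fin k,
    if j + 1 ≤ (l : ℕ) then 0
    else (RatFunc.X⁻¹ : RatFunc ℝ) ^ (j+1) * RatFunc.C (aCoef A B C u j l i)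
      * (RatFunc.X : RatFunc ℝ) ^ (l : ℕ)

lemma sum_mulVec {α : Type*} (s : Finset α) (M : α → Matrix (Fin p) (Fin m) (RatFunc ℝ))
    (v : Fin m → RatFunc ℝ) : (∑ a ∈ s, M a).mulVec v = ∑ a ∈ s, (M a).mulVec v := by
  ext i
  simp only [Matrix.mulVec, dotProduct, Matrix.sum_apply, Finset.sum_mul,
    Finset.sum_apply]
  rw [Finset.sum_comm]


lemma Xinv_mul_pow (c d : ℕ) (h : c ≤ d) (a : ℝ) :
    (RatFunc.X⁻¹ : RatFunc ℝ) ^ c * (RatFunc.C a * RatFunc.X ^ d)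
      = RatFunc.C a * RatFunc.X ^ (d - c) := by
  obtain ⟨e, rfl⟩ : ∃ e, d = c + e := ⟨d - c, by omega⟩
  rw [Nat.add_sub_cancel_left, pow_add, inv_pow]
  have hX : ((RatFunc.X : RatFunc ℝ) ^ c) ≠ 0 := pow_ne_zero _ RatFunc.X_ne_zero
  field_simp

noncomputable def transferMatrix' : Matrix (Fin p) (Fin m) (RatFunc ℝ) :=
  C.map (algebraMap ℝ (RatFunc ℝ)) *
      (Matrix.scalar (Fin n) (RatFunc.X : RatFunc ℝ) - A.map (algebraMap ℝ (RatFunc ℝ)))⁻¹ *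
      B.map (algebraMap ℝ (RatFunc ℝ)) +
    D.map (algebraMap ℝ (RatFunc ℝ))

lemma tm_expand (K : ℕ) :
    transferMatrix' A B C D =
      (∑ j ∈ Finset.range K,
        ((RatFunc.X⁻¹ : RatFunc ℝ) ^ (j+1)) • ((C * A ^ j * B).map (algebraMap ℝ (RatFunc ℝ)))) +
      ((RatFunc.X⁻¹ : RatFunc ℝ) ^ K) • Trem A B C K + D.map (algebraMap ℝ (RatFunc ℝ)) := by
  rw [transferMatrix']
  have : (Matrix.scalar (Fin n) (RatFunc.X : RatFunc ℝ)
      - A.map (algebraMap ℝ (RatFunc ℝ)))⁻¹ = (Smat A)⁻¹ := rfl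
  rw [this, Smat_inv_expand A K]
  congr 1
  rw [Matrix.mul_add, Matrix.add_mul, Matrix.mul_sum, Matrix.sum_mul]
  congr 1
  · refine Finset.sum_congr rfl fun j _ => ?_
    rw [Matrix.mul_smul, Matrix.smul_mul]
    congr 1
    have hpow : (A.map (algebraMap ℝ (RatFunc ℝ))) ^ j = (A ^ j).map (algebraMap ℝ (RatFunc ℝ)) := by
      simp only [← RingHom.mapMatrix_apply, ← map_pow]
    rw [hpow, ← Matrix.map_mul, ← Matrix.map_mul]
  · rw [Matrix.mul_smul, Matrix.smul_mul, Trem]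

lemma decomp (K : ℕ) (i : Fin p) :
    ((transferMatrix' A B C D).mulVec (Uvec u)) i =
      algebraMap (Polynomial ℝ) (RatFunc ℝ) (Ppoly A B C D u K i) + Erem A B C u K i := by
  rw [tm_expand A B C D K, Matrix.add_mulVec, Matrix.add_mulVec, sum_mulVec,
    Matrix.smul_mulVec]
  have h1 : ∀ j ∈ Finset.range K,
      ((((RatFunc.X⁻¹ : RatFunc ℝ) ^ (j+1)) • ((C * A ^ j * B).map (algebraMap ℝ (RatFunc ℝ)))).mulVec
        (Uvec u)) i
      = algebraMap (Polynomial ℝ) (RatFunc ℝ)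
          (∑ l : Fin k, if j + 1 ≤ (l : ℕ) then
            Polynomial.C (aCoef A B C u j l i) * Polynomial.X ^ ((l : ℕ) - (j+1)) else 0)
        + ∑ l : Fin k, (if j + 1 ≤ (l : ℕ) then 0
            else (RatFunc.X⁻¹ : RatFunc ℝ) ^ (j+1) * RatFunc.C (aCoef A B C u j l i)
              * (RatFunc.X : RatFunc ℝ) ^ (l : ℕ)) := by
    intro j _
    rw [Matrix.smul_mulVec, Pi.smul_apply, smul_eq_mul, mulVec_map_eq u _ i]
    have : ∀ l : Fin k, ((C * A ^ j * B).mulVec (u l)) i = aCoef A B C u j l i := fun _ => rfl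
    simp only [this]
    rw [map_sum, map_sum, Finset.mul_sum, ← Finset.sum_add_distrib]
    refine Finset.sum_congr rfl fun l _ => ?_
    by_cases h : j + 1 ≤ (l : ℕ)
    · rw [if_pos h, if_pos h, add_zero, _root_.map_mul, map_pow, RatFunc.algebraMap_X,
        RatFunc.algebraMap_C, _root_.map_mul, map_pow, RatFunc.algebraMap_X, RatFunc.algebraMap_C,
        Xinv_mul_pow _ _ h]
    · rw [if_neg h, if_neg h, map_zero, zero_add, _root_.map_mul, map_pow, RatFunc.algebraMap_X,
        RatFunc.algebraMap_C]
      ring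
  rw [Pi.add_apply, Pi.add_apply, Finset.sum_apply, Finset.sum_congr rfl h1, Finset.sum_add_distrib, Pi.smul_apply, smul_eq_mul, mulVec_map_eq u D i, Ppoly, Erem, map_add]
  simp only [map_sum]
  ring

end Main2

section Main3
set_option synthInstance.maxHeartbeats 400000
set_option maxHeartbeats 1000000

variable {n m p k : ℕ} (A : Matrix (Fin n) (Fin n) ℝ) (B : Matrix (Fin n) (Fin m) ℝ)
    (C : Matrix (Fin p) (Fin n) ℝ) (D : Matrix (Fin p) (Fin m) ℝ) (u : Fin k → Fin m → ℝ)

noncomputable def ebound : ℕ :=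
  Finset.univ.sup fun ab : Fin n × Fin n => ((Smat A)⁻¹ ab.1 ab.2).intDegree.toNat

def Bnd (e : ℕ) (x : RatFunc ℝ) : Prop := x = 0 ∨ x.intDegree ≤ (e : ℤ)

lemma Bnd_add {e : ℕ} {x y : RatFunc ℝ} (hx : Bnd e x) (hy : Bnd e y) : Bnd e (x + y) := by
  rcases hx with rfl | hx
  · simpa using hy
  rcases hy with rfl | hy
  · rw [add_zero]; exact Or.inr hx
  by_cases hxy : x + y = 0
  · exact Or.inl hxy
  right
  by_cases hy0 : y = 0
  · rw [hy0, add_zero]; exact hx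
  calc (x + y).intDegree ≤ max x.intDegree y.intDegree := RatFunc.intDegree_add_le hy0 hxy
    _ ≤ (e : ℤ) := max_le hx hy

lemma Bnd_sum {e : ℕ} {α : Type*} (s : Finset α) (f : α → RatFunc ℝ)
    (h : ∀ a ∈ s, Bnd e (f a)) : Bnd e (∑ a ∈ s, f a) := by
  classical
  induction s using Finset.induction_on with
  | empty => exact Or.inl (by simp)
  | insert _ _ hnot ih =>
    rw [Finset.sum_insert hnot]
    exact Bnd_add (h _ (Finset.mem_insert_self _ _))
      (ih fun b hb => h _ (Finset.mem_insert_of_mem hb))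

lemma Bnd_const_mul {e : ℕ} (r : ℝ) {x : RatFunc ℝ} (h : Bnd e x) :
    Bnd e (algebraMap ℝ (RatFunc ℝ) r * x) := by
  by_cases hr : r = 0
  · exact Or.inl (by simp [hr])
  rcases h with rfl | h
  · exact Or.inl (by simp)
  by_cases hx : x = 0
  · exact Or.inl (by simp [hx])
  right
  have hr' : algebraMap ℝ (RatFunc ℝ) r ≠ 0 := by
    simpa using (map_ne_zero_iff _ (algebraMap ℝ (RatFunc ℝ)).injective).mpr hr
  rw [RatFunc.intDegree_mul hr' hx, intDeg_const]
  omega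

lemma Bnd_mul_const {e : ℕ} (r : ℝ) {x : RatFunc ℝ} (h : Bnd e x) :
    Bnd e (x * algebraMap ℝ (RatFunc ℝ) r) := by
  rw [mul_comm]; exact Bnd_const_mul r h

lemma Bnd_Smat_inv (a b : Fin n) : Bnd (ebound A) ((Smat A)⁻¹ a b) := by
  right
  refine le_trans (Int.self_le_toNat _) ?_
  exact_mod_cast Nat.cast_le.mpr (Finset.le_sup (f := fun ab : Fin n × Fin n =>
    ((Smat A)⁻¹ ab.1 ab.2).intDegree.toNat) (Finset.mem_univ (a, b)))

lemma Bnd_Trem (K : ℕ) (i : Fin p) (j' : Fin m) : Bnd (ebound A) (Trem A B C K i j') := by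
  rw [Trem, Matrix.mul_apply]
  refine Bnd_sum _ _ fun b _ => ?_
  refine Bnd_mul_const _ ?_
  rw [Matrix.mul_apply]
  refine Bnd_sum _ _ fun a _ => ?_
  refine Bnd_const_mul _ ?_
  have hpow : (A.map (algebraMap ℝ (RatFunc ℝ))) ^ K
      = (A ^ K).map (algebraMap ℝ (RatFunc ℝ)) := by
    simp only [← RingHom.mapMatrix_apply, ← map_pow]
  rw [hpow, Matrix.mul_apply]
  refine Bnd_sum _ _ fun c _ => ?_
  exact Bnd_const_mul _ (Bnd_Smat_inv A c b)

lemma Uvec_deg (j' : Fin m) :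
    Uvec u j' = 0 ∨ (Uvec u j').intDegree ≤ (k : ℤ) - 1 := by
  set q : Polynomial ℝ := ∑ l : Fin k, Polynomial.C (u l j') * Polynomial.X ^ (l : ℕ) with hq
  by_cases h : q = 0
  · left; rw [Uvec, ← hq, h, map_zero]
  right
  have hk : k ≠ 0 := by
    rintro rfl
    exact h (by simp [hq])
  have hdeg : q.natDegree ≤ k - 1 := by
    rw [hq]
    refine Polynomial.natDegree_sum_le_of_forall_le _ _ fun l _ => ?_
    refine le_trans (Polynomial.natDegree_mul_le) ?_
    simp only [Polynomial.natDegree_C, Polynomial.natDegree_X_pow, zero_add]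
    omega
  rw [Uvec, ← hq, RatFunc.intDegree_polynomial]
  omega

lemma SP_Erem (i : Fin p) (hk : 0 < k) : SP (Erem A B C u (k + ebound A) i) := by
  rw [Erem]
  refine SP_add ?_ (SP_sum _ _ fun j _ => SP_sum _ _ fun l _ => ?_)
  · rw [Matrix.mulVec, dotProduct, Finset.mul_sum]
    refine SP_sum _ _ fun j' _ => ?_
    by_cases hT : Trem A B C (k + ebound A) i j' = 0
    · simp [hT, SP_zero]
    by_cases hU : Uvec u j' = 0
    · simp [hU, SP_zero]
    have hTb : (Trem A B C (k + ebound A) i j').intDegree ≤ (ebound A : ℤ) :=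
      (Bnd_Trem A B C (k + ebound A) i j').resolve_left hT
    have hUb : (Uvec u j').intDegree ≤ (k : ℤ) - 1 := (Uvec_deg u j').resolve_left hU
    refine SP_of_neg _ ?_
    have hXi : ((RatFunc.X⁻¹ : RatFunc ℝ) ^ (k + ebound A)) ≠ 0 :=
      pow_ne_zero _ (inv_ne_zero RatFunc.X_ne_zero)
    rw [RatFunc.intDegree_mul hXi (mul_ne_zero hT hU), RatFunc.intDegree_mul hT hU,
      intDeg_Xinv_pow]
    push_cast
    omega
  · by_cases h : j + 1 ≤ (l : ℕ)
    · simp [h, SP_zero]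
    rw [if_neg h]
    by_cases ha : aCoef A B C u j l i = 0
    · simp [ha, SP_zero]
    refine SP_of_neg _ ?_
    have h1 : ((RatFunc.X⁻¹ : RatFunc ℝ) ^ (j + 1)) ≠ 0 :=
      pow_ne_zero _ (inv_ne_zero RatFunc.X_ne_zero)
    have h2 : (RatFunc.C (aCoef A B C u j l i)) ≠ 0 := by
      simpa using (map_ne_zero_iff _ (RingHom.injective (RatFunc.C (K := ℝ)))).mpr ha
    have h3 : ((RatFunc.X : RatFunc ℝ) ^ (l : ℕ)) ≠ 0 := pow_ne_zero _ RatFunc.X_ne_zero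
    rw [RatFunc.intDegree_mul (mul_ne_zero h1 h2) h3, RatFunc.intDegree_mul h1 h2,
      intDeg_Xinv_pow, RatFunc.intDegree_C, intDeg_X_pow]
    omega

end Main3

section Final
set_option synthInstance.maxHeartbeats 400000
set_option maxHeartbeats 1000000

noncomputable def Markov' {n m p : ℕ} (A : Matrix (Fin n) (Fin n) ℝ) (B : Matrix (Fin n) (Fin m) ℝ)
    (C : Matrix (Fin p) (Fin n) ℝ) (D : Matrix (Fin p) (Fin m) ℝ) (k : ℕ) :
    Matrix (Fin k × Fin p) (Fin k × Fin m) ℝ :=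
  fun ir jc =>
    if (ir.1 : ℕ) + (jc.1 : ℕ) + 1 < k then 0
    else if (ir.1 : ℕ) + (jc.1 : ℕ) + 1 = k then D ir.2 jc.2
    else (C * A ^ ((ir.1 : ℕ) + (jc.1 : ℕ) - k) * B) ir.2 jc.2

theorem admissible_in_kernel' {n m p k : ℕ}
    (A : Matrix (Fin n) (Fin n) ℝ) (B : Matrix (Fin n) (Fin m) ℝ)
    (C : Matrix (Fin p) (Fin n) ℝ) (D : Matrix (Fin p) (Fin m) ℝ)
    (u : Fin k → Fin m → ℝ)
    (hadm : ∀ i, SP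
      (((transferMatrix' A B C D).mulVec fun j => algebraMap (Polynomial ℝ) (RatFunc ℝ)
        (∑ l : Fin k, Polynomial.C (u l j) * Polynomial.X ^ (l : ℕ))) i)) :
    (Markov' A B C D k).mulVec (fun jc => u jc.1 jc.2) = 0 := by
  classical
  rcases Nat.eq_zero_or_pos k with hk0 | hk
  · subst hk0
    funext ir
    exact ir.1.elim0
  set K := k + ebound A with hK
  have hP : ∀ i, Ppoly A B C D u K i = 0 := by
    intro i
    have hadm' : SP (((transferMatrix' A B C D).mulVec (Uvec u)) i) := hadm i
    rw [decomp A B C D u K i] at hadm'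
    have heq : algebraMap (Polynomial ℝ) (RatFunc ℝ) (Ppoly A B C D u K i)
        = (algebraMap (Polynomial ℝ) (RatFunc ℝ) (Ppoly A B C D u K i) + Erem A B C u K i)
          + (- Erem A B C u K i) := by ring
    exact SP_poly_eq_zero (by rw [heq]; exact SP_add hadm' (SP_neg (SP_Erem A B C u i hk)))
  funext ir
  obtain ⟨r, i⟩ := ir
  have hrk : (r : ℕ) < k := r.isLt
  obtain ⟨t, htdef⟩ : ∃ t, t = k - 1 - (r : ℕ) := ⟨_, rfl⟩
  have ht : t < k := by omega
  have hc : (Ppoly A B C D u K i).coeff t = 0 := by rw [hP i]; simp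
  have hcoeff : (Ppoly A B C D u K i).coeff t
      = (D.mulVec (u ⟨t, ht⟩)) i
        + ∑ l : Fin k, (if t < (l : ℕ) then aCoef A B C u ((l : ℕ) - t - 1) l i else 0) := by
    rw [Ppoly, Polynomial.coeff_add, Polynomial.finset_sum_coeff, Polynomial.finset_sum_coeff]
    congr 1
    · rw [Finset.sum_eq_single (⟨t, ht⟩ : Fin k)]
      · simp [Polynomial.coeff_C_mul, Polynomial.coeff_X_pow]
      · intro l _ hne
        have hne' : ¬ (t = (l : ℕ)) := fun h => hne (Fin.ext (show (l : ℕ) = t by omega))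
        simp [Polynomial.coeff_C_mul, Polynomial.coeff_X_pow, hne']
      · intro habs; exact absurd (Finset.mem_univ _) habs
    · simp only [Polynomial.finset_sum_coeff]
      rw [Finset.sum_comm]
      refine Finset.sum_congr rfl fun l _ => ?_
      by_cases hlt : t < (l : ℕ)
      · rw [Finset.sum_eq_single ((l : ℕ) - t - 1), if_pos hlt]
        · rw [apply_ite (fun q : Polynomial ℝ => q.coeff t), if_pos (by omega : (l:ℕ) - t - 1 + 1 ≤ (l:ℕ)),
            Polynomial.coeff_C_mul, Polynomial.coeff_X_pow, if_pos (by omega), mul_one]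
        · intro j _ hne
          rw [apply_ite (fun q : Polynomial ℝ => q.coeff t)]
          by_cases hj : j + 1 ≤ (l : ℕ)
          · rw [if_pos hj, Polynomial.coeff_C_mul, Polynomial.coeff_X_pow, if_neg (by omega),
              mul_zero]
          · rw [if_neg hj, Polynomial.coeff_zero]
        · intro habs
          exact absurd (Finset.mem_range.mpr (by omega)) habs
      · rw [if_neg hlt]
        refine Finset.sum_eq_zero fun j _ => ?_
        rw [apply_ite (fun q : Polynomial ℝ => q.coeff t)]
        by_cases hj : j + 1 ≤ (l : ℕ)
        · rw [if_pos hj, Polynomial.coeff_C_mul, Polynomial.coeff_X_pow, if_neg (by omega),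
            mul_zero]
        · rw [if_neg hj, Polynomial.coeff_zero]
  show ∑ x : Fin k × Fin m, Markov' A B C D k (r, i) x * u x.1 x.2 = 0
  rw [Fintype.sum_prod_type]
  have hper : ∀ l : Fin k,
      (∑ j : Fin m, Markov' A B C D k (r, i) (l, j) * u l j)
        = (if (l : ℕ) = t then (D.mulVec (u l)) i else 0)
          + (if t < (l : ℕ) then aCoef A B C u ((l : ℕ) - t - 1) l i else 0) := by
    intro l
    rcases lt_trichotomy ((l : ℕ)) t with h | h | h
    · rw [if_neg (by omega), if_neg (by omega), add_zero]
      refine Finset.sum_eq_zero fun j _ => ?_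
      rw [Markov']
      simp only
      rw [if_pos (by omega : (r : ℕ) + (l : ℕ) + 1 < k), zero_mul]
    · rw [if_pos h, if_neg (by omega), add_zero]
      rw [Matrix.mulVec, dotProduct]
      refine Finset.sum_congr rfl fun j _ => ?_
      rw [Markov']
      simp only
      rw [if_neg (by omega), if_pos (by omega : (r : ℕ) + (l : ℕ) + 1 = k)]
    · rw [if_neg (by omega), zero_add, if_pos h, aCoef, Matrix.mulVec, dotProduct]
      refine Finset.sum_congr rfl fun j _ => ?_
      rw [Markov']
      simp only
      rw [if_neg (by omega), if_neg (by omega)]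
      have hexp : (r : ℕ) + (l : ℕ) - k = (l : ℕ) - t - 1 := by omega
      rw [hexp]
  rw [Finset.sum_congr rfl fun l _ => hper l, Finset.sum_add_distrib]
  have hfirst : (∑ l : Fin k, if (l : ℕ) = t then (D.mulVec (u l)) i else 0)
      = (D.mulVec (u ⟨t, ht⟩)) i := by
    rw [Finset.sum_eq_single (⟨t, ht⟩ : Fin k)]
    · simp
    · intro l _ hne
      exact if_neg fun h => hne (Fin.ext (show (l : ℕ) = t by omega))
    · intro habs; exact absurd (Finset.mem_univ _) habs
  rw [hfirst, ← hcoeff, hc]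

end Final

/-- If `u(t) = Σ_{i=0}^{k-1} uᵢ δ⁽ⁱ⁾` is an admissible impulsive input (i.e.
`G(s)U(s)` is strictly proper), then `col(u₀, …, u_{k-1}) ∈ ker M_k`. -/
theorem admissible_in_kernel {n m p k : ℕ}
    (A : Matrix (Fin n) (Fin n) ℝ) (B : Matrix (Fin n) (Fin m) ℝ)
    (C : Matrix (Fin p) (Fin n) ℝ) (D : Matrix (Fin p) (Fin m) ℝ)
    (u : Fin k → Fin m → ℝ)
    (hadm : ∀ i, StrictlyProper
      (((transferMatrix A B C D).mulVec fun j => algebraMap (Polynomial ℝ) (RatFunc ℝ)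
        (∑ l : Fin k, Polynomial.C (u l j) * Polynomial.X ^ (l : ℕ))) i)) :
    (Markov A B C D k).mulVec (fun jc => u jc.1 jc.2) = 0 := by
  exact admissible_in_kernel' A B C D u (fun i => hadm i)
end

section
/- Let G(s) ∈ ℝ(s)^{p×m} be left-invertible over ℝ(s) and let G_sq(s) ∈ ℝ(s)^{m×m} be any rational matrix satisfying G(-s)^T G(s) = G_sq(-s)^T G_sq(s). Then for every vector polynomial U(s) ∈ ℝ[s]^m, G(s)U(s) is strictly proper if and only if G_sq(s)U(s) is strictly proper. -/
open Matrix Polynomial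

/-- The substitution `s ↦ -s` on a real rational function `r`,
given by `r(-s) = num(-s)/denom(-s)`. -/
noncomputable def negs (r : RatFunc ℝ) : RatFunc ℝ :=
  algebraMap (Polynomial ℝ) (RatFunc ℝ) (r.num.comp (-Polynomial.X)) /
    algebraMap (Polynomial ℝ) (RatFunc ℝ) (r.denom.comp (-Polynomial.X))

/-! ### Auxiliary material -/

/-- Composition with `-X` as a ring hom on polynomials. -/
noncomputable def compNeg : Polynomial ℝ →+* Polynomial ℝ :=
  Polynomial.eval₂RingHom Polynomial.C (-Polynomial.X)

lemma compNeg_apply (p : Polynomial ℝ) : compNeg p = p.comp (-Polynomial.X) := rfl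

lemma comp_negX_ne_zero {p : Polynomial ℝ} (hp : p ≠ 0) : p.comp (-Polynomial.X) ≠ 0 := by
  intro h
  apply hp
  have h2 : (p.comp (-Polynomial.X)).comp (-Polynomial.X) = p := by
    rw [Polynomial.comp_assoc]; simp
  rw [← h2, h, Polynomial.zero_comp]

lemma compNeg_ne_zero {p : Polynomial ℝ} (hp : p ≠ 0) : compNeg p ≠ 0 :=
  comp_negX_ne_zero hp

/-- The substitution `s ↦ -s` as a ring hom on rational functions. -/
noncomputable def negsHom : RatFunc ℝ →+* RatFunc ℝ :=
  RatFunc.liftRingHom ((algebraMap (Polynomial ℝ) (RatFunc ℝ)).comp compNeg) (by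
    intro p hp
    simp only [Submonoid.mem_comap, RingHom.comp_apply]
    exact mem_nonZeroDivisors_of_ne_zero (by
      simpa using RatFunc.algebraMap_ne_zero (compNeg_ne_zero (nonZeroDivisors.ne_zero hp))))

lemma negs_eq_apply (r : RatFunc ℝ) : negs r = negsHom r := by
  conv_rhs => rw [← RatFunc.num_div_denom r]
  rw [negsHom, RatFunc.liftRingHom_apply_div]
  rfl

lemma negs_eq : negs = ⇑negsHom := funext negs_eq_apply

/-- Key data extracted from the cross-multiplication identity for quotients. -/
lemma div_facts {p q : Polynomial ℝ} (hp : p ≠ 0) (hq : q ≠ 0) :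
    (algebraMap (Polynomial ℝ) (RatFunc ℝ) p / algebraMap (Polynomial ℝ) (RatFunc ℝ) q) ≠ 0 ∧
    (algebraMap (Polynomial ℝ) (RatFunc ℝ) p /
        algebraMap (Polynomial ℝ) (RatFunc ℝ) q).num.leadingCoeff
      = p.leadingCoeff / q.leadingCoeff ∧
    (algebraMap (Polynomial ℝ) (RatFunc ℝ) p /
        algebraMap (Polynomial ℝ) (RatFunc ℝ) q).intDegree
      = (p.natDegree : ℤ) - q.natDegree := by
  set r := algebraMap (Polynomial ℝ) (RatFunc ℝ) p / algebraMap (Polynomial ℝ) (RatFunc ℝ) q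
    with hr
  have hr0 : r ≠ 0 := div_ne_zero (RatFunc.algebraMap_ne_zero hp) (RatFunc.algebraMap_ne_zero hq)
  have hcross : r.num * q = p * r.denom := (RatFunc.num_mul_eq_mul_denom_iff hq).mpr hr
  have hnum0 : r.num ≠ 0 := RatFunc.num_ne_zero hr0
  have hden0 : r.denom ≠ 0 := r.denom_ne_zero
  have hlc : r.num.leadingCoeff * q.leadingCoeff = p.leadingCoeff * r.denom.leadingCoeff := by
    rw [← Polynomial.leadingCoeff_mul, ← Polynomial.leadingCoeff_mul, hcross]
  have hmon := (RatFunc.monic_denom r).leadingCoeff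
  refine ⟨hr0, ?_, ?_⟩
  · rw [hmon, mul_one] at hlc
    field_simp [Polynomial.leadingCoeff_ne_zero.mpr hq, hlc]
    exact hlc
  · have hdeg : r.num.natDegree + q.natDegree = p.natDegree + r.denom.natDegree := by
      rw [← Polynomial.natDegree_mul hnum0 hq, ← Polynomial.natDegree_mul hp hden0, hcross]
    rw [RatFunc.intDegree]
    omega

lemma lc_mul {r s : RatFunc ℝ} (hr : r ≠ 0) (hs : s ≠ 0) :
    (r * s).num.leadingCoeff = r.num.leadingCoeff * s.num.leadingCoeff := by
  have h := RatFunc.num_denom_mul r s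
  have h2 := congrArg Polynomial.leadingCoeff h
  rw [Polynomial.leadingCoeff_mul, Polynomial.leadingCoeff_mul, Polynomial.leadingCoeff_mul,
    Polynomial.leadingCoeff_mul, (RatFunc.monic_denom r).leadingCoeff,
    (RatFunc.monic_denom s).leadingCoeff, (RatFunc.monic_denom (r * s)).leadingCoeff,
    mul_one, mul_one, mul_one] at h2
  exact h2

lemma poly_add_lead {a b : Polynomial ℝ} (ha : a ≠ 0) (hb : b ≠ 0)
    (hd : a.natDegree = b.natDegree) (hlc : a.leadingCoeff + b.leadingCoeff ≠ 0) :
    a + b ≠ 0 ∧ (a + b).natDegree = a.natDegree ∧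
      (a + b).leadingCoeff = a.leadingCoeff + b.leadingCoeff := by
  have hdeg : a.degree = b.degree := by
    rw [Polynomial.degree_eq_natDegree ha, Polynomial.degree_eq_natDegree hb, hd]
  have h1 : (a + b).degree = a.degree := by
    rw [Polynomial.degree_add_eq_of_leadingCoeff_add_ne_zero hlc, hdeg, max_self]
  have hab : a + b ≠ 0 := by
    intro h; rw [h, Polynomial.degree_zero] at h1
    exact ha (Polynomial.degree_eq_bot.mp h1.symm)
  refine ⟨hab, Polynomial.natDegree_eq_of_degree_eq h1, ?_⟩
  have h2 : (a + b).coeff a.natDegree = a.leadingCoeff + b.leadingCoeff := by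
    rw [Polynomial.coeff_add, Polynomial.leadingCoeff, Polynomial.leadingCoeff, hd]
  rw [Polynomial.leadingCoeff, Polynomial.natDegree_eq_of_degree_eq h1, h2]

lemma poly_add_lead' {a b : Polynomial ℝ} (ha : a ≠ 0) (hd : b.degree < a.degree) :
    a + b ≠ 0 ∧ (a + b).natDegree = a.natDegree ∧ (a + b).leadingCoeff = a.leadingCoeff := by
  have h1 : (a + b).degree = a.degree := by
    rw [add_comm]; exact Polynomial.degree_add_eq_right_of_degree_lt hd
  have hab : a + b ≠ 0 := by
    intro h; rw [h, Polynomial.degree_zero] at h1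
    exact ha (Polynomial.degree_eq_bot.mp h1.symm)
  refine ⟨hab, Polynomial.natDegree_eq_of_degree_eq h1, ?_⟩
  rw [add_comm]
  exact Polynomial.leadingCoeff_add_of_degree_lt hd

/-- Nonzero, even `intDegree`, and positive signed leading coefficient. -/
def Pos (r : RatFunc ℝ) : Prop :=
  r ≠ 0 ∧ ∃ k : ℤ, r.intDegree = 2 * k ∧ 0 < (-1 : ℝ) ^ k * r.num.leadingCoeff

lemma Pos.add {r s : RatFunc ℝ} (hr : Pos r) (hs : Pos s) (hle : s.intDegree ≤ r.intDegree) :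
    Pos (r + s) ∧ (r + s).intDegree = r.intDegree := by
  obtain ⟨hr0, kr, hkr, hlr⟩ := hr
  obtain ⟨hs0, ks, hks, hls⟩ := hs
  have hnr := RatFunc.num_ne_zero hr0
  have hns := RatFunc.num_ne_zero hs0
  have hdr := r.denom_ne_zero
  have hds := s.denom_ne_zero
  set a := r.num * s.denom with hadef
  set b := r.denom * s.num with hbdef
  have ha0 : a ≠ 0 := mul_ne_zero hnr hds
  have hb0 : b ≠ 0 := mul_ne_zero hdr hns
  have hda : a.natDegree = r.num.natDegree + s.denom.natDegree := Polynomial.natDegree_mul hnr hds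
  have hdb : b.natDegree = r.denom.natDegree + s.num.natDegree := Polynomial.natDegree_mul hdr hns
  have hla : a.leadingCoeff = r.num.leadingCoeff := by
    rw [Polynomial.leadingCoeff_mul, (RatFunc.monic_denom s).leadingCoeff, mul_one]
  have hlb : b.leadingCoeff = s.num.leadingCoeff := by
    rw [Polynomial.leadingCoeff_mul, (RatFunc.monic_denom r).leadingCoeff, one_mul]
  have hidr : r.intDegree = (r.num.natDegree : ℤ) - r.denom.natDegree := rfl
  have hids : s.intDegree = (s.num.natDegree : ℤ) - s.denom.natDegree := rfl
  have hcross := RatFunc.num_denom_add r s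
  have hq0 : r.denom * s.denom ≠ 0 := mul_ne_zero hdr hds
  have hrs : r + s = algebraMap (Polynomial ℝ) (RatFunc ℝ) (a + b) /
      algebraMap (Polynomial ℝ) (RatFunc ℝ) (r.denom * s.denom) :=
    (RatFunc.num_mul_eq_mul_denom_iff hq0).mp hcross
  have hmain : a + b ≠ 0 ∧ (a + b).natDegree = a.natDegree ∧
      ((a + b).leadingCoeff = a.leadingCoeff ∨
        ((a + b).leadingCoeff = a.leadingCoeff + b.leadingCoeff ∧ ks = kr)) := by
    rcases lt_or_eq_of_le hle with hlt | heqd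
    · have hdeglt : b.degree < a.degree := by
        rw [Polynomial.degree_eq_natDegree ha0, Polynomial.degree_eq_natDegree hb0]
        exact_mod_cast (by omega : (b.natDegree : ℤ) < a.natDegree)
      obtain ⟨h1, h2, h3⟩ := poly_add_lead' ha0 hdeglt
      exact ⟨h1, h2, Or.inl h3⟩
    · have hk : ks = kr := by omega
      subst hk
      have hdeq : a.natDegree = b.natDegree := by omega
      have hlcne : a.leadingCoeff + b.leadingCoeff ≠ 0 := by
        have hpos : 0 < (-1 : ℝ) ^ ks * (a.leadingCoeff + b.leadingCoeff) := by
          rw [hla, hlb, mul_add]; exact add_pos hlr hls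
        intro h; rw [h, mul_zero] at hpos; exact lt_irrefl _ hpos
      obtain ⟨h1, h2, h3⟩ := poly_add_lead ha0 hb0 hdeq hlcne
      exact ⟨h1, h2, Or.inr ⟨h3, rfl⟩⟩
  obtain ⟨hab0, habdeg, hablc⟩ := hmain
  obtain ⟨h0, hlc, hid⟩ := div_facts hab0 hq0
  rw [← hrs] at h0 hlc hid
  have hqlc : (r.denom * s.denom).leadingCoeff = 1 := by
    rw [Polynomial.leadingCoeff_mul, (RatFunc.monic_denom r).leadingCoeff,
      (RatFunc.monic_denom s).leadingCoeff, mul_one]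
  have hqdeg : (r.denom * s.denom).natDegree = r.denom.natDegree + s.denom.natDegree :=
    Polynomial.natDegree_mul hdr hds
  have hidrs : (r + s).intDegree = r.intDegree := by
    rw [hid, habdeg, hda, hqdeg]; omega
  refine ⟨⟨h0, kr, by rw [hidrs, hkr], ?_⟩, hidrs⟩
  rw [hlc, hqlc, div_one]
  rcases hablc with h | ⟨h, hk⟩
  · rw [h, hla]; exact hlr
  · rw [h, hla, hlb, mul_add]
    have hls' : 0 < (-1 : ℝ) ^ kr * s.num.leadingCoeff := by rw [← hk]; exact hls
    exact add_pos hlr hls'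

lemma Pos.add' {r s : RatFunc ℝ} (hr : Pos r) (hs : Pos s) :
    Pos (r + s) ∧ (r + s).intDegree = max r.intDegree s.intDegree := by
  rcases le_total s.intDegree r.intDegree with h | h
  · have := Pos.add hr hs h
    rwa [max_eq_left h]
  · have := Pos.add hs hr h
    rw [add_comm s r] at this
    rwa [max_eq_right h]

lemma Pos.sum {ι : Type*} (S : Finset ι) (hS : S.Nonempty) (t : ι → RatFunc ℝ)
    (h : ∀ i ∈ S, Pos (t i)) :
    Pos (∑ i ∈ S, t i) ∧ (∑ i ∈ S, t i).intDegree = S.sup' hS fun i => (t i).intDegree := by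
  induction hS using Finset.Nonempty.cons_induction with
  | singleton i => simpa using h i (by simp)
  | cons i S hiS hS ih =>
    have hi : Pos (t i) := h i (by simp)
    obtain ⟨h1, h2⟩ := ih (fun j hj => h j (by simp [hj]))
    rw [Finset.sum_cons, Finset.sup'_cons]
    obtain ⟨h3, h4⟩ := Pos.add' hi h1
    exact ⟨h3, by rw [h4, h2]⟩

lemma negs_facts {v : RatFunc ℝ} (hv : v ≠ 0) :
    negs v ≠ 0 ∧ (negs v).intDegree = v.intDegree ∧
      (negs v).num.leadingCoeff
        = (-1 : ℝ) ^ (v.num.natDegree + v.denom.natDegree) * v.num.leadingCoeff := by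
  have hn := RatFunc.num_ne_zero hv
  have hd := v.denom_ne_zero
  obtain ⟨h0, hlc, hid⟩ := div_facts (comp_negX_ne_zero hn) (comp_negX_ne_zero hd)
  rw [← negs] at h0 hlc hid
  have hdegn : (v.num.comp (-Polynomial.X)).natDegree = v.num.natDegree := by
    rw [Polynomial.natDegree_comp]; simp
  have hdegd : (v.denom.comp (-Polynomial.X)).natDegree = v.denom.natDegree := by
    rw [Polynomial.natDegree_comp]; simp
  have hlcn : (v.num.comp (-Polynomial.X)).leadingCoeff
      = (-1 : ℝ) ^ v.num.natDegree * v.num.leadingCoeff := by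
    rw [Polynomial.leadingCoeff_comp (by simp)]; simp [mul_comm]
  have hlcd : (v.denom.comp (-Polynomial.X)).leadingCoeff = (-1 : ℝ) ^ v.denom.natDegree := by
    rw [Polynomial.leadingCoeff_comp (by simp)]; simp [(RatFunc.monic_denom v).leadingCoeff]
  refine ⟨h0, by rw [hid, hdegn, hdegd]; rfl, ?_⟩
  rw [hlc, hlcn, hlcd, pow_add]
  rw [div_eq_mul_inv]
  have hinv : ((-1 : ℝ) ^ v.denom.natDegree)⁻¹ = (-1 : ℝ) ^ v.denom.natDegree := by
    rcases Nat.even_or_odd v.denom.natDegree with h | h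
    · rw [h.neg_one_pow]; norm_num
    · rw [h.neg_one_pow]; norm_num
  rw [hinv]; ring

lemma key1 {v : RatFunc ℝ} (hv : v ≠ 0) :
    Pos (negs v * v) ∧ (negs v * v).intDegree = 2 * v.intDegree := by
  obtain ⟨h0, hid, hlc⟩ := negs_facts hv
  have ht0 : negs v * v ≠ 0 := mul_ne_zero h0 hv
  have htid : (negs v * v).intDegree = 2 * v.intDegree := by
    rw [RatFunc.intDegree_mul h0 hv, hid]; ring
  have htlc : (negs v * v).num.leadingCoeff
      = (-1 : ℝ) ^ (v.num.natDegree + v.denom.natDegree) * v.num.leadingCoeff ^ 2 := by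
    rw [lc_mul h0 hv, hlc]; ring
  refine ⟨⟨ht0, v.intDegree, htid, ?_⟩, htid⟩
  rw [htlc]
  have hlcne : v.num.leadingCoeff ≠ 0 :=
    Polynomial.leadingCoeff_ne_zero.mpr (RatFunc.num_ne_zero hv)
  have hsq : (0:ℝ) < v.num.leadingCoeff ^ 2 := by positivity
  have hsign : (-1 : ℝ) ^ v.intDegree * (-1 : ℝ) ^ (v.num.natDegree + v.denom.natDegree) = 1 := by
    have hidv : v.intDegree = (v.num.natDegree : ℤ) - v.denom.natDegree := rfl
    rw [hidv, ← zpow_natCast (-1 : ℝ) (v.num.natDegree + v.denom.natDegree),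
      ← zpow_add₀ (by norm_num : (-1:ℝ) ≠ 0)]
    have h2 : (v.num.natDegree : ℤ) - v.denom.natDegree
        + ((v.num.natDegree + v.denom.natDegree : ℕ) : ℤ) = 2 * v.num.natDegree := by
      push_cast; ring
    rw [h2]
    have heven : Even (2 * (v.num.natDegree : ℤ)) := even_two_mul _
    exact heven.neg_one_zpow
  calc (0:ℝ) < 1 * v.num.leadingCoeff ^ 2 := by linarith
    _ = (-1 : ℝ) ^ v.intDegree * ((-1 : ℝ) ^ (v.num.natDegree + v.denom.natDegree)
          * v.num.leadingCoeff ^ 2) := by rw [← mul_assoc, hsign]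

lemma sp_iff {r : RatFunc ℝ} : StrictlyProper r ↔ r = 0 ∨ r.intDegree < 0 := by
  rcases eq_or_ne r 0 with h | h
  · subst h
    simp [StrictlyProper, RatFunc.num_zero, Polynomial.degree_zero]
  · rw [StrictlyProper, Polynomial.degree_eq_natDegree (RatFunc.num_ne_zero h),
      Polynomial.degree_eq_natDegree r.denom_ne_zero, Nat.cast_lt]
    have hdef : r.intDegree = (r.num.natDegree : ℤ) - r.denom.natDegree := rfl
    constructor
    · intro hlt; right; omega
    · rintro (h' | h')
      · exact absurd h' h
      · omega

lemma main_iff {n : ℕ} (v : Fin n → RatFunc ℝ) :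
    (∀ i, StrictlyProper (v i)) ↔ StrictlyProper (∑ i, negs (v i) * v i) := by
  classical
  set S := Finset.univ.filter (fun i => v i ≠ 0) with hSdef
  have hsum : ∑ i, negs (v i) * v i = ∑ i ∈ S, negs (v i) * v i := by
    rw [hSdef]
    refine (Finset.sum_filter_of_ne ?_).symm
    intro i _ hne h0
    apply hne
    rw [h0, mul_zero]
  rcases S.eq_empty_or_nonempty with hS | hS
  · have hzero : ∀ i, v i = 0 := by
      intro i
      by_contra hne
      have hi : i ∈ S := by simp [hSdef, hne]
      rw [hS] at hi; simp at hi
    constructor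
    · intro _; rw [hsum, hS, Finset.sum_empty]; exact sp_iff.mpr (Or.inl rfl)
    · intro _ i; rw [hzero i]; exact sp_iff.mpr (Or.inl rfl)
  · obtain ⟨hPos, hid⟩ := Pos.sum S hS _ (fun i hi => (key1 (by simpa [hSdef] using hi)).1)
    have hid2 : ∀ i ∈ S, (negs (v i) * v i).intDegree = 2 * (v i).intDegree := by
      intro i hi; exact (key1 (by simpa [hSdef] using hi)).2
    rw [hsum, sp_iff]
    constructor
    · intro hall
      right
      rw [hid, Finset.sup'_lt_iff]
      intro i hi
      have hvi : v i ≠ 0 := by simpa [hSdef] using hi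
      have hd := (sp_iff.mp (hall i)).resolve_left hvi
      rw [hid2 i hi]; omega
    · rintro (h0 | hlt)
      · exact absurd h0 hPos.1
      · intro i
        rcases eq_or_ne (v i) 0 with hvi | hvi
        · exact sp_iff.mpr (Or.inl hvi)
        · have hiS : i ∈ S := by simp [hSdef, hvi]
          refine sp_iff.mpr (Or.inr ?_)
          rw [hid] at hlt
          have hlt2 := (Finset.sup'_lt_iff hS).mp hlt i hiS
          rw [hid2 i hiS] at hlt2; omega

lemma dot_id {p m : ℕ} (A : Matrix (Fin p) (Fin m) (RatFunc ℝ)) (u : Fin m → RatFunc ℝ) :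
    ∑ i, negs (A.mulVec u i) * A.mulVec u i
      = (fun j => negs (u j)) ⬝ᵥ (((A.map negs).transpose * A).mulVec u) := by
  rw [negs_eq]
  have h1 : (fun i => negsHom (A.mulVec u i)) = (A.map negsHom).mulVec fun j => negsHom (u j) := by
    funext i
    simp [Matrix.mulVec, dotProduct, map_sum, _root_.map_mul]
  calc ∑ i, negsHom (A.mulVec u i) * A.mulVec u i
      = (fun i => negsHom (A.mulVec u i)) ⬝ᵥ A.mulVec u := rfl
    _ = ((A.map negsHom).mulVec fun j => negsHom (u j)) ⬝ᵥ A.mulVec u := by rw [h1]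
    _ = A.mulVec u ⬝ᵥ (A.map negsHom).mulVec fun j => negsHom (u j) := dotProduct_comm _ _
    _ = (A.mulVec u ᵥ* (A.map negsHom)) ⬝ᵥ fun j => negsHom (u j) := dotProduct_mulVec _ _ _
    _ = (fun j => negsHom (u j)) ⬝ᵥ (A.mulVec u ᵥ* (A.map negsHom)) := dotProduct_comm _ _
    _ = (fun j => negsHom (u j)) ⬝ᵥ ((A.map negsHom).transpose.mulVec (A.mulVec u)) := by
        rw [Matrix.mulVec_transpose]
    _ = (fun j => negsHom (u j)) ⬝ᵥ (((A.map negsHom).transpose * A).mulVec u) := by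
        rw [Matrix.mulVec_mulVec]

/-- If `G(s)` is left-invertible over `ℝ(s)` and `G_sq(s)` satisfies
`G(-s)ᵀ G(s) = G_sq(-s)ᵀ G_sq(s)`, then for every vector polynomial `U(s)`,
`G(s)U(s)` is strictly proper iff `G_sq(s)U(s)` is strictly proper. -/
theorem squared_system_same_admissible {p m : ℕ}
    (G : Matrix (Fin p) (Fin m) (RatFunc ℝ)) (Gsq : Matrix (Fin m) (Fin m) (RatFunc ℝ))
    (hleft : ∃ H : Matrix (Fin m) (Fin p) (RatFunc ℝ), H * G = 1)
    (heq : (G.map negs).transpose * G = (Gsq.map negs).transpose * Gsq)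
    (U : Fin m → Polynomial ℝ) :
    (∀ i, StrictlyProper
        ((G.mulVec fun j => algebraMap (Polynomial ℝ) (RatFunc ℝ) (U j)) i)) ↔
    (∀ i, StrictlyProper
        ((Gsq.mulVec fun j => algebraMap (Polynomial ℝ) (RatFunc ℝ) (U j)) i)) := by
  set u : Fin m → RatFunc ℝ := fun j => algebraMap (Polynomial ℝ) (RatFunc ℝ) (U j) with hu
  have h1 : ∑ i, negs (G.mulVec u i) * G.mulVec u i
      = ∑ i, negs (Gsq.mulVec u i) * Gsq.mulVec u i := by
    rw [dot_id, dot_id, heq]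
  rw [main_iff (G.mulVec u), main_iff (Gsq.mulVec u), h1]
end
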